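/- For every positive real r and positive integer x, the measure μ(r, x+1) stochastically dominates μ(r, x), where μ(r,x) is the normalized measure with weights proportional to C(2y,y)·C(y, x−y)·r^y on integers y with h(x) ≤ y ≤ x. -/

import Mathlib

/-- `h x` is the smallest integer `y` with `2 * y ≥ x` (the upper half of `x`). -/
def upperHalf (x : ℕ) : ℕ := (x + 1) / 2

/-- Weight of `ν(r,x)` at `y`. -/
noncomputable def w (r : ℝ) (x y : ℕ) : ℝ :=
  (Nat.choose (2 * y) y : ℝ) * (Nat.choose y (x - y) : ℝ) * r ^ y

lemma w_nonneg (r : ℝ) (hr : 0 ≤ r) (x y : ℕ) : 0 ≤ w r x y := by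
  unfold w; positivity

/-- Key binomial inequality: the likelihood ratio is increasing. -/
lemma choose_key {x u y : ℕ} (hu : x + 1 ≤ 2 * u) (huy : u < y) (hy : y ≤ x) :
    Nat.choose y (x - y) * Nat.choose u (x + 1 - u) ≤
      Nat.choose y (x + 1 - y) * Nat.choose u (x - u) := by
  have e1 : x + 1 - y = (x - y) + 1 := by omega
  have e2 : x + 1 - u = (x - u) + 1 := by omega
  have h1 := Nat.choose_succ_right_eq y (x - y)
  have h2 := Nat.choose_succ_right_eq u (x - u)
  have hy' : y - (x - y) = 2 * y - x := by omega
  have hu' : u - (x - u) = 2 * u - x := by omega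
  rw [hy'] at h1; rw [hu'] at h2
  rw [e1, e2]
  apply Nat.le_of_mul_le_mul_right
    (c := ((x - y) + 1) * ((x - u) + 1)) _ (by positivity)
  calc Nat.choose y (x - y) * Nat.choose u ((x - u) + 1) * (((x - y) + 1) * ((x - u) + 1))
      = Nat.choose y (x - y) * (Nat.choose u ((x - u) + 1) * ((x - u) + 1)) * ((x - y) + 1) := by
        ring
    _ = Nat.choose y (x - y) * (Nat.choose u (x - u) * (2 * u - x)) * ((x - y) + 1) := by
        rw [h2]
    _ ≤ Nat.choose y (x - y) * (Nat.choose u (x - u) * (2 * y - x)) * ((x - u) + 1) := by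
        apply Nat.mul_le_mul
        · exact Nat.mul_le_mul_left _ (Nat.mul_le_mul_left _ (by omega))
        · omega
    _ = (Nat.choose y (x - y) * (2 * y - x)) * (Nat.choose u (x - u) * ((x - u) + 1)) := by
        ring
    _ = (Nat.choose y ((x - y) + 1) * ((x - y) + 1)) * (Nat.choose u (x - u) * ((x - u) + 1)) := by
        rw [h1]
    _ = Nat.choose y ((x - y) + 1) * Nat.choose u (x - u) * (((x - y) + 1) * ((x - u) + 1)) := by
        ring

/-- Generic rearrangement lemma: monotone likelihood ratio implies tail domination. -/
lemma sum_mlr (T : Finset ℕ) (a b : ℕ → ℝ)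
    (h : ∀ y ∈ T, ∀ u ∈ T, u < y → a y * b u ≤ b y * a u) (z : ℕ) :
    (∑ y ∈ T.filter (fun y => z ≤ y), a y) * (∑ u ∈ T, b u) ≤
      (∑ y ∈ T.filter (fun y => z ≤ y), b y) * (∑ u ∈ T, a u) := by
  rw [← Finset.sum_filter_add_sum_filter_not T (fun y => z ≤ y) b,
    ← Finset.sum_filter_add_sum_filter_not T (fun y => z ≤ y) a, mul_add, mul_add]
  have key : (∑ y ∈ T.filter (fun y => z ≤ y), a y) *
        (∑ u ∈ T.filter (fun y => ¬ z ≤ y), b u) ≤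
      (∑ y ∈ T.filter (fun y => z ≤ y), b y) *
        (∑ u ∈ T.filter (fun y => ¬ z ≤ y), a u) := by
    rw [Finset.sum_mul_sum, Finset.sum_mul_sum]
    apply Finset.sum_le_sum
    intro y hy
    apply Finset.sum_le_sum
    intro u hu
    rw [Finset.mem_filter] at hy hu
    exact h y hy.1 u hu.1 (by omega)
  have comm : (∑ y ∈ T.filter (fun y => z ≤ y), a y) *
      (∑ y ∈ T.filter (fun y => z ≤ y), b y) =
      (∑ y ∈ T.filter (fun y => z ≤ y), b y) *
      (∑ y ∈ T.filter (fun y => z ≤ y), a y) := mul_comm _ _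
  linarith

/-- MLR property of the concrete weights. -/
lemma mlr_w (r : ℝ) (hr : 0 ≤ r) (x : ℕ) (y u : ℕ) (_hyx : y ≤ x + 1) (huy : u < y) :
    (if y ≤ x then w r x y else 0) * w r (x + 1) u ≤
      w r (x + 1) y * (if u ≤ x then w r x u else 0) := by
  by_cases hy : y ≤ x
  · rw [if_pos hy, if_pos (by omega)]
    by_cases hu : x + 1 ≤ 2 * u
    · -- main case
      have hnat := choose_key hu huy hy
      have hcast : ((Nat.choose y (x - y) : ℝ) * (Nat.choose u (x + 1 - u) : ℝ)) ≤
          ((Nat.choose y (x + 1 - y) : ℝ) * (Nat.choose u (x - u) : ℝ)) := by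
        exact_mod_cast hnat
      have hpos : (0 : ℝ) ≤ (Nat.choose (2 * y) y : ℝ) * (Nat.choose (2 * u) u : ℝ) *
          r ^ y * r ^ u := by positivity
      calc w r x y * w r (x + 1) u
          = ((Nat.choose (2 * y) y : ℝ) * (Nat.choose (2 * u) u : ℝ) * r ^ y * r ^ u) *
            ((Nat.choose y (x - y) : ℝ) * (Nat.choose u (x + 1 - u) : ℝ)) := by
            unfold w; ring
        _ ≤ ((Nat.choose (2 * y) y : ℝ) * (Nat.choose (2 * u) u : ℝ) * r ^ y * r ^ u) *
            ((Nat.choose y (x + 1 - y) : ℝ) * (Nat.choose u (x - u) : ℝ)) := by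
            exact mul_le_mul_of_nonneg_left hcast hpos
        _ = w r (x + 1) y * w r x u := by unfold w; ring
    · -- b u = 0
      have : Nat.choose u (x + 1 - u) = 0 := Nat.choose_eq_zero_of_lt (by omega)
      have hz : w r (x + 1) u = 0 := by unfold w; rw [this]; simp
      rw [hz, mul_zero]
      exact mul_nonneg (w_nonneg r hr _ _) (w_nonneg r hr _ _)
  · rw [if_neg hy, zero_mul]
    by_cases hu : u ≤ x
    · rw [if_pos hu]; exact mul_nonneg (w_nonneg r hr _ _) (w_nonneg r hr _ _)
    · rw [if_neg hu, mul_zero]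

theorem mu_stochastically_increasing_in_x (r : ℝ) (hr : 0 < r) (x : ℕ) (hx : 1 ≤ x)
    (z : ℕ) :
    (∑ y ∈ (Finset.Icc (upperHalf x) x).filter (fun y => z ≤ y), w r x y) /
        (∑ y ∈ Finset.Icc (upperHalf x) x, w r x y)
      ≤ (∑ y ∈ (Finset.Icc (upperHalf (x + 1)) (x + 1)).filter (fun y => z ≤ y), w r (x + 1) y) /
        (∑ y ∈ Finset.Icc (upperHalf (x + 1)) (x + 1), w r (x + 1) y) := by
  set T : Finset ℕ := Finset.Icc (upperHalf x) (x + 1) with hT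
  set a : ℕ → ℝ := fun y => if y ≤ x then w r x y else 0 with ha
  set b : ℕ → ℝ := fun y => w r (x + 1) y with hb
  have hsub1 : Finset.Icc (upperHalf x) x ⊆ T := Finset.Icc_subset_Icc_right (by omega)
  have hsub2 : Finset.Icc (upperHalf (x + 1)) (x + 1) ⊆ T :=
    Finset.Icc_subset_Icc_left (by unfold upperHalf; omega)
  -- b vanishes below upperHalf (x+1)
  have hbzero : ∀ y ∈ T, y ∉ Finset.Icc (upperHalf (x + 1)) (x + 1) → b y = 0 := by
    intro y hyT hyn
    rw [Finset.mem_Icc] at hyT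
    rw [Finset.mem_Icc] at hyn
    have hlt : y < upperHalf (x + 1) := by omega
    have h2y : x + 1 - y > y := by unfold upperHalf at hlt; omega
    have : Nat.choose y (x + 1 - y) = 0 := Nat.choose_eq_zero_of_lt h2y
    simp [hb, w, this]
  -- full sum equalities
  have ea : ∑ y ∈ Finset.Icc (upperHalf x) x, w r x y = ∑ y ∈ T, a y := by
    rw [show ∑ y ∈ Finset.Icc (upperHalf x) x, w r x y
        = ∑ y ∈ Finset.Icc (upperHalf x) x, a y from
      Finset.sum_congr rfl (fun y hy => by
        rw [Finset.mem_Icc] at hy; simp [ha, hy.2])]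
    exact Finset.sum_subset hsub1 (fun y hyT hyn => by
      rw [Finset.mem_Icc] at hyT; rw [Finset.mem_Icc] at hyn
      simp only [ha]; rw [if_neg (by omega)])
  have eb : ∑ y ∈ Finset.Icc (upperHalf (x + 1)) (x + 1), w r (x + 1) y = ∑ y ∈ T, b y :=
    Finset.sum_subset hsub2 hbzero
  -- filtered sum equalities
  have efa : ∑ y ∈ (Finset.Icc (upperHalf x) x).filter (fun y => z ≤ y), w r x y
      = ∑ y ∈ T.filter (fun y => z ≤ y), a y := by
    rw [show ∑ y ∈ (Finset.Icc (upperHalf x) x).filter (fun y => z ≤ y), w r x y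
        = ∑ y ∈ (Finset.Icc (upperHalf x) x).filter (fun y => z ≤ y), a y from
      Finset.sum_congr rfl (fun y hy => by
        rw [Finset.mem_filter, Finset.mem_Icc] at hy; simp [ha, hy.1.2])]
    exact Finset.sum_subset (Finset.filter_subset_filter _ hsub1) (fun y hyT hyn => by
      rw [Finset.mem_filter] at hyT
      rw [Finset.mem_filter, Finset.mem_Icc] at hyn
      rw [Finset.mem_Icc] at hyT
      simp only [ha]; rw [if_neg (by omega)])
  have efb : ∑ y ∈ (Finset.Icc (upperHalf (x + 1)) (x + 1)).filter (fun y => z ≤ y), w r (x + 1) y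
      = ∑ y ∈ T.filter (fun y => z ≤ y), b y :=
    Finset.sum_subset (Finset.filter_subset_filter _ hsub2) (fun y hyT hyn => by
      rw [Finset.mem_filter] at hyT hyn
      exact hbzero y hyT.1 (fun hmem => hyn ⟨hmem, hyT.2⟩))
  -- positivity of denominators
  have hden1 : 0 < ∑ y ∈ Finset.Icc (upperHalf x) x, w r x y := by
    apply Finset.sum_pos' (fun y _ => w_nonneg r hr.le x y)
    refine ⟨x, Finset.mem_Icc.mpr ⟨by unfold upperHalf; omega, le_refl x⟩, ?_⟩
    unfold w
    rw [Nat.sub_self, Nat.choose_zero_right]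
    have h1 : 0 < (Nat.choose (2 * x) x : ℝ) := by
      exact_mod_cast Nat.choose_pos (by omega)
    have h2 : (0 : ℝ) < r ^ x := pow_pos hr x
    push_cast
    nlinarith
  have hden2 : 0 < ∑ y ∈ Finset.Icc (upperHalf (x + 1)) (x + 1), w r (x + 1) y := by
    apply Finset.sum_pos' (fun y _ => w_nonneg r hr.le (x + 1) y)
    refine ⟨x + 1, Finset.mem_Icc.mpr ⟨by unfold upperHalf; omega, le_refl _⟩, ?_⟩
    unfold w
    rw [Nat.sub_self, Nat.choose_zero_right]
    have h1 : 0 < (Nat.choose (2 * (x + 1)) (x + 1) : ℝ) := by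
      exact_mod_cast Nat.choose_pos (by omega)
    have h2 : (0 : ℝ) < r ^ (x + 1) := pow_pos hr _
    push_cast
    nlinarith
  rw [div_le_div_iff₀ hden1 hden2, efa, efb, ea, eb]
  apply sum_mlr
  intro y hyT u _ huy
  rw [Finset.mem_Icc] at hyT
  exact mlr_w r hr.le x y u hyT.2 huy
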